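/- Let T = (V,E) be a tree with at least 4 nodes, and let u, v ∈ V with d(u,v) ≥ 3. Denote by ū = the first internal node on the u–v path after u, and v̄ = the first internal node before v. Then the intersection inequality x_{uv} + x_{ū v̄} ≤ x_{u v̄} + x_{ū v} is valid for LMC(T): every characteristic vector of a multicut of K_V lifted from T satisfies it. -/

import Mathlib

open Finset

open scoped Classical

variable {V : Type*}

/-- A decomposition of a graph `G`: a partition of the node set all of whose blocks
induce connected subgraphs. -/
def IsDecomposition (G : SimpleGraph V) (P : Set (Set V)) : Prop :=
  Setoid.IsPartition P ∧ ∀ U ∈ P, (G.induce U).Connected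

/-- Two nodes lie in a common block of `P`. -/
def SameBlock (P : Set (Set V)) (u v : V) : Prop :=
  ∃ U ∈ P, u ∈ U ∧ v ∈ U

/-- The edge `e` straddles two distinct blocks of `P`. -/
def Crosses (P : Set (Set V)) (e : Sym2 V) : Prop :=
  ∃ u v, e = s(u, v) ∧ ¬ SameBlock P u v

/-- The multicut of `G` induced by a decomposition `P`. -/
def inducedMulticut (G : SimpleGraph V) (P : Set (Set V)) : Set (Sym2 V) :=
  {e | e ∈ G.edgeSet ∧ Crosses P e}

/-- `M` is a multicut of `G`. -/
def IsMulticut (G : SimpleGraph V) (M : Set (Sym2 V)) : Prop :=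
  ∃ P, IsDecomposition G P ∧ M = inducedMulticut G P

/-- The characteristic vector (in the ambient space `Sym2 V → ℝ`, with coordinates
outside the edge set of `H` pinned to `0`) of the multicut of `H` induced by `P`. -/
noncomputable def multicutVec (H : SimpleGraph V) (P : Set (Set V)) : Sym2 V → ℝ :=
  fun e => if e ∈ H.edgeSet ∧ Crosses P e then 1 else 0

/-- Characteristic vectors of multicuts of `H` lifted from `G`. -/
def liftedVectors (G H : SimpleGraph V) : Set (Sym2 V → ℝ) :=
  {x | ∃ P, IsDecomposition G P ∧ x = multicutVec H P}

/-- The lifted multicut polytope with respect to `G` and `H`. -/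
def LMC (G H : SimpleGraph V) : Set (Sym2 V → ℝ) :=
  convexHull ℝ (liftedVectors G H)

/-- The inequality `f x ≤ b` is valid for `P` and its equality set has affine dimension
`|E ∪ F| - 1`, i.e. one less than the dimension of the corresponding lifted multicut
polytope for the augmented graph `H`. -/
def DefinesFacet (H : SimpleGraph V) (P : Set (Sym2 V → ℝ))
    (f : (Sym2 V → ℝ) → ℝ) (b : ℝ) : Prop :=
  (∀ x ∈ P, f x ≤ b) ∧
  Module.finrank ℝ (affineSpan ℝ {x | x ∈ P ∧ f x = b}).direction + 1 = Nat.card H.edgeSet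


lemma sameBlock_symm {P : Set (Set V)} {a b : V} (h : SameBlock P a b) : SameBlock P b a := by
  obtain ⟨U, hU, ha, hb⟩ := h; exact ⟨U, hU, hb, ha⟩

lemma crosses_iff {P : Set (Set V)} {a b : V} :
    Crosses P s(a, b) ↔ ¬ SameBlock P a b := by
  constructor
  · rintro ⟨c, d, he, hcd⟩ h
    rcases Sym2.eq_iff.mp he with ⟨rfl, rfl⟩ | ⟨rfl, rfl⟩
    · exact hcd h
    · exact hcd (sameBlock_symm h)
  · intro h; exact ⟨a, b, rfl, h⟩

lemma path_subset_block {G : SimpleGraph V} (hT : G.IsTree) {P : Set (Set V)}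
    (hP : IsDecomposition G P) {U : Set V} (hU : U ∈ P) {a b : V}
    (ha : a ∈ U) (hb : b ∈ U) (q : G.Walk a b) (hq : q.IsPath) :
    ∀ w ∈ q.support, w ∈ U := by
  obtain ⟨w0⟩ := ((hP.2 U hU) ⟨a, ha⟩ ⟨b, hb⟩)
  let w1 : G.Walk a b := w0.map (SimpleGraph.Embedding.induce U).toHom
  have huniq : q = w1.bypass := by
    have := hT.IsAcyclic.path_unique ⟨q, hq⟩ ⟨w1.bypass, w1.bypass_isPath⟩
    exact congrArg Subtype.val this
  intro w hw
  rw [huniq] at hw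
  have hw1 : w ∈ w1.support := w1.support_bypass_subset hw
  replace hw1 : w ∈ w0.support.map (SimpleGraph.Embedding.induce U).toHom :=
    Eq.mp (congrArg (w ∈ ·) (SimpleGraph.Walk.support_map (f := (SimpleGraph.Embedding.induce U).toHom) (p := w0))) hw1
  obtain ⟨⟨x, hx⟩, _, rfl⟩ := List.mem_map.mp hw1
  exact hx

/-- validity of the intersection inequality for the lifted multicut
polytope of a tree: if `u - ū - ⋯ - v̄ - v` is a path of length at least 3 in the
tree `G`, then every characteristic vector of a multicut of the complete graph lifted
from `G` satisfies `x_{uv} + x_{ū v̄} ≤ x_{u v̄} + x_{ū v}`. -/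
theorem tree_intersection_inequality_valid
    {V : Type*} [Fintype V] (G : SimpleGraph V) (hT : G.IsTree)
    (u ub vb v : V)
    (h1 : G.Adj u ub) (h2 : G.Adj vb v)
    (p : G.Walk ub vb) (hlen : 1 ≤ p.length)
    (hp : ((SimpleGraph.Walk.cons h1 p).concat h2).IsPath)
    (huv : u ≠ v) (h_u_vb : u ≠ vb) (h_ub_v : ub ≠ v) (h_ub_vb : ub ≠ vb) :
    ∀ x ∈ liftedVectors G ⊤,
      x s(u, v) + x s(ub, vb) ≤ x s(u, vb) + x s(ub, v) := by
  rintro x ⟨P, hP, rfl⟩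
  -- supports
  have hsup := hp.support_nodup
  rw [SimpleGraph.Walk.support_concat, SimpleGraph.Walk.support_cons] at hsup
  have hpath1 : (SimpleGraph.Walk.cons h1 p).IsPath := by
    rw [SimpleGraph.Walk.isPath_def, SimpleGraph.Walk.support_cons]
    exact hsup.sublist (by simpa using (List.sublist_concat _ _).cons_cons u)
  have hpath2 : (p.concat h2).IsPath := by
    rw [SimpleGraph.Walk.isPath_def, SimpleGraph.Walk.support_concat]
    exact (List.nodup_cons.mp hsup).2
  -- key implications
  have F1 : SameBlock P u vb → SameBlock P ub vb := by
    rintro ⟨U, hU, hu, hvb⟩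
    have := path_subset_block hT hP hU hu hvb _ hpath1
    exact ⟨U, hU, this ub (by simp [SimpleGraph.Walk.support_cons,
      SimpleGraph.Walk.start_mem_support]), hvb⟩
  have F2 : SameBlock P ub v → SameBlock P ub vb := by
    rintro ⟨U, hU, hub, hv⟩
    have := path_subset_block hT hP hU hub hv _ hpath2
    exact ⟨U, hU, hub, this vb (by simp [SimpleGraph.Walk.support_concat,
      SimpleGraph.Walk.end_mem_support])⟩
  have F3 : SameBlock P u vb → SameBlock P ub v → SameBlock P u v := by
    rintro ⟨U, hU, hu, hvb⟩ ⟨W, hW, hub, hv⟩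
    have hpu := path_subset_block hT hP hU hu hvb _ hpath1
    have hubU : ub ∈ U := hpu ub (by simp [SimpleGraph.Walk.support_cons,
      SimpleGraph.Walk.start_mem_support])
    have : U = W := by
      obtain ⟨y, -, hy⟩ := hP.1.2 ub
      rw [hy U ⟨hU, hubU⟩, hy W ⟨hW, hub⟩]
    exact ⟨U, hU, hu, this ▸ hv⟩
  -- rewrite the multicut vector values
  have hx : ∀ a b : V, a ≠ b →
      multicutVec ⊤ P s(a, b) = if SameBlock P a b then 0 else 1 := by
    intro a b hab
    simp only [multicutVec, SimpleGraph.edgeSet_top, Set.mem_setOf_eq,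
      Sym2.isDiag_iff_proj_eq, crosses_iff]
    by_cases h : SameBlock P a b <;> simp [h, hab]
  rw [hx u v huv, hx ub vb h_ub_vb, hx u vb h_u_vb, hx ub v h_ub_v]
  by_cases hA : SameBlock P u vb <;> by_cases hB : SameBlock P ub v
  · simp [hA, hB, F1 hA, F3 hA hB]
  · simpa [hA, hB, F1 hA] using by split <;> norm_num
  · simpa [hA, hB, F2 hB] using by split <;> norm_num
  · simp only [hA, hB, if_neg, if_false]
    have : ∀ c : Prop, [Decidable c] → (if c then (0:ℝ) else 1) ≤ 1 := by
      intro c _; split <;> norm_num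
    linarith [this (SameBlock P u v), this (SameBlock P ub vb)]
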